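/- Unbiased gradient estimator: with notation as in the repeated-parameter shift rule, if i is sampled uniformly from {0,…,n−1}, s uniformly from {−1,+1}, and x is sampled from the output distribution Q(x|s,i) of the shifted circuit with measurement costs λ(x), then the random variable n·s·λ(x) has expectation equal to f'(θ), where f(θ) = Σ_x λ(x) Q_θ(x). -/

import Mathlib

open Real Matrix

/-- The Pauli rotation unitary `U(θ) = exp(-i(θ/2)σ) = cos(θ/2)·I - i·sin(θ/2)·σ`. -/
noncomputable def pauliRot {D : ℕ} (σ : Matrix (Fin D) (Fin D) ℂ) (θ : ℝ) :
    Matrix (Fin D) (Fin D) ℂ :=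
  (Real.cos (θ / 2) : ℂ) • (1 : Matrix (Fin D) (Fin D) ℂ) -
    (Complex.I * (Real.sin (θ / 2) : ℂ)) • σ

/-- The conjugation channel `𝒰_θ(ρ) = U(θ) ρ U(θ)†`. -/
noncomputable def pauliRotChannel {D : ℕ} (σ : Matrix (Fin D) (Fin D) ℂ) (θ : ℝ)
    (ρ : Matrix (Fin D) (Fin D) ℂ) : Matrix (Fin D) (Fin D) ℂ :=
  pauliRot σ θ * ρ * (pauliRot σ θ)ᴴ

/-- The circuit `𝒲_n ∘ 𝒰_{θ_{n-1}} ∘ 𝒲_{n-1} ∘ ⋯ ∘ 𝒰_{θ_0} ∘ 𝒲_0`. -/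
noncomputable def rotChain {D : ℕ} (σ : Matrix (Fin D) (Fin D) ℂ) :
    (n : ℕ) →
    (Fin (n + 1) → Matrix (Fin D) (Fin D) ℂ →ₗ[ℂ] Matrix (Fin D) (Fin D) ℂ) →
    (Fin n → ℝ) → Matrix (Fin D) (Fin D) ℂ → Matrix (Fin D) (Fin D) ℂ
  | 0, W, _, ρ => W 0 ρ
  | n + 1, W, θs, ρ =>
      W (Fin.last (n + 1)) (pauliRotChannel σ (θs (Fin.last n))
        (rotChain σ n (fun i => W i.castSucc) (fun i => θs i.castSucc) ρ))

/-! ### Auxiliary machinery for the parameter-shift rule -/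

/-- Trigonometric basis functions `1, cos, sin`. -/
noncomputable def phi : Fin 3 → ℝ → ℂ
  | 0, _ => 1
  | 1, t => (Real.cos t : ℂ)
  | 2, t => (Real.sin t : ℂ)

/-- Derivatives of the trigonometric basis functions. -/
noncomputable def phid : Fin 3 → ℝ → ℂ
  | 0, _ => 0
  | 1, t => -(Real.sin t : ℂ)
  | 2, t => (Real.cos t : ℂ)

lemma phi_hasDerivAt (k : Fin 3) (θ : ℝ) : HasDerivAt (fun t => phi k t) (phid k θ) θ := by
  fin_cases k
  · simpa [phi, phid] using hasDerivAt_const θ (1:ℂ)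
  · simpa [phi, phid] using (Real.hasDerivAt_cos θ).ofReal_comp
  · simpa [phi, phid] using (Real.hasDerivAt_sin θ).ofReal_comp

lemma phi_shift (k : Fin 3) (θ : ℝ) :
    (1/2 : ℂ) * (phi k (θ + π/2) - phi k (θ - π/2)) = phid k θ := by
  fin_cases k <;>
    simp [phi, phid, Real.cos_add_pi_div_two, Real.cos_sub_pi_div_two,
      Real.sin_add_pi_div_two, Real.sin_sub_pi_div_two] <;> ring

lemma pair_shift (k : Fin 3) (θ : ℝ) :
    ∑ s ∈ ({-1,1} : Finset ℝ), ((s:ℂ)/2) * phi k (θ + s*(π/2)) = phid k θ := by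
  rw [Finset.sum_pair (by norm_num : (-1:ℝ) ≠ 1)]
  rw [show θ + (-1:ℝ)*(π/2) = θ - π/2 by ring, show θ + (1:ℝ)*(π/2) = θ + π/2 by ring]
  have h := phi_shift k θ
  push_cast
  linear_combination h

/-- The three components of the Pauli rotation channel. -/
noncomputable def Qop {D : ℕ} (σ : Matrix (Fin D) (Fin D) ℂ) :
    Fin 3 → Matrix (Fin D) (Fin D) ℂ → Matrix (Fin D) (Fin D) ℂ
  | 0, M => ((1:ℂ)/2) • (M + σ*M*σ)
  | 1, M => ((1:ℂ)/2) • (M - σ*M*σ)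
  | 2, M => (Complex.I/2) • (M*σ - σ*M)

lemma channel_decomp {D : ℕ} (σ : Matrix (Fin D) (Fin D) ℂ) (hherm : σᴴ = σ) (t : ℝ)
    (M : Matrix (Fin D) (Fin D) ℂ) :
    pauliRotChannel σ t M = ∑ k : Fin 3, phi k t • Qop σ k M := by
  have hadj : (pauliRot σ t)ᴴ = (Real.cos (t/2) : ℂ) • (1 : Matrix (Fin D) (Fin D) ℂ)
      + (Complex.I * (Real.sin (t/2) : ℂ)) • σ := by
    rw [pauliRot, conjTranspose_sub, conjTranspose_smul, conjTranspose_smul,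
      conjTranspose_one, hherm]
    simp only [star_mul', Complex.star_def, Complex.conj_ofReal, Complex.conj_I]
    module
  have hcC : Complex.cos ((t:ℂ)) = 2 * Complex.cos ((t:ℂ)/2)^2 - 1 := by
    have h := Complex.cos_two_mul ((t:ℂ)/2)
    rw [show 2*((t:ℂ)/2) = (t:ℂ) by ring] at h
    rw [h]
  have hsC : Complex.sin ((t:ℂ)) = 2 * Complex.sin ((t:ℂ)/2) * Complex.cos ((t:ℂ)/2) := by
    have h := Complex.sin_two_mul ((t:ℂ)/2)
    rw [show 2*((t:ℂ)/2) = (t:ℂ) by ring] at h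
    rw [h]
  have hpyth : Complex.sin ((t:ℂ)/2)^2 + Complex.cos ((t:ℂ)/2)^2 = 1 :=
    Complex.sin_sq_add_cos_sq _
  have hI : Complex.I^2 = -1 := Complex.I_sq
  rw [pauliRotChannel, hadj, pauliRot, Fin.sum_univ_three]
  simp only [phi, Qop, sub_mul, mul_add, smul_mul_assoc, mul_smul_comm, one_mul, mul_one,
    smul_smul, smul_add, smul_sub]
  push_cast
  rw [hcC, hsC]
  match_scalars <;>
    first
      | ring1
      | linear_combination hpyth - Complex.sin ((t:ℂ)/2)^2 * hI

lemma channel_sum {D : ℕ} (σ : Matrix (Fin D) (Fin D) ℂ) (t : ℝ) {ι : Type*} (s : Finset ι)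
    (c : ι → ℂ) (M : ι → Matrix (Fin D) (Fin D) ℂ) :
    pauliRotChannel σ t (∑ v ∈ s, c v • M v) = ∑ v ∈ s, c v • pauliRotChannel σ t (M v) := by
  simp [pauliRotChannel, Finset.mul_sum, Finset.sum_mul, mul_smul_comm, smul_mul_assoc]

/-- The circuit output is a multilinear combination of `1, cos, sin` of each parameter. -/
lemma chain_repr {D : ℕ} (σ : Matrix (Fin D) (Fin D) ℂ) (hherm : σᴴ = σ) :
    ∀ (n : ℕ) (W : Fin (n+1) → Matrix (Fin D) (Fin D) ℂ →ₗ[ℂ] Matrix (Fin D) (Fin D) ℂ)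
      (ρ : Matrix (Fin D) (Fin D) ℂ),
    ∃ C : (Fin n → Fin 3) → Matrix (Fin D) (Fin D) ℂ,
      ∀ θs : Fin n → ℝ,
        rotChain σ n W θs ρ = ∑ v : Fin n → Fin 3, (∏ i, phi (v i) (θs i)) • C v := by
  intro n
  induction n with
  | zero =>
    intro W ρ
    exact ⟨fun _ => W 0 ρ, fun θs => by simp [rotChain]⟩
  | succ n ih =>
    intro W ρ
    obtain ⟨C, hC⟩ := ih (fun i => W i.castSucc) ρ
    refine ⟨fun w => W (Fin.last (n+1))
      (Qop σ (w (Fin.last n)) (C (fun i => w i.castSucc))), fun θs => ?_⟩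
    show W (Fin.last (n+1)) (pauliRotChannel σ (θs (Fin.last n)) _) = _
    rw [hC, channel_sum, map_sum]
    have step : ∀ v : Fin n → Fin 3,
        (∏ i, phi (v i) (θs i.castSucc)) •
          W (Fin.last (n+1)) (pauliRotChannel σ (θs (Fin.last n)) (C v)) =
        ∑ k : Fin 3, ((∏ i, phi (v i) (θs i.castSucc)) * phi k (θs (Fin.last n))) •
          W (Fin.last (n+1)) (Qop σ k (C v)) := by
      intro v
      rw [channel_decomp σ hherm, map_sum, Finset.smul_sum]
      refine Finset.sum_congr rfl fun k _ => ?_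
      rw [_root_.map_smul, smul_smul]
    simp only [_root_.map_smul, step]
    rw [← Fintype.sum_prod_type']
    refine Fintype.sum_equiv ((Equiv.prodComm _ _).trans (Fin.snocEquiv (fun _ => Fin 3)))
      _ _ fun p => ?_
    obtain ⟨v, k⟩ := p
    simp only [Equiv.trans_apply, Equiv.prodComm_apply, Prod.swap_prod_mk, Fin.snocEquiv,
      Equiv.coe_fn_mk]
    rw [Fin.prod_univ_castSucc]
    simp only [Fin.snoc_castSucc, Fin.snoc_last]

/-- Unbiased gradient estimator: sampling `i` uniformly from `{0,…,n−1}`, `s` uniformly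
from `{−1,+1}` and then an outcome `x` from the shifted-circuit output distribution
`Q(x|s,i) = tr[Π_x 𝒬^{s,i}_θ(ρ)]`, the random variable `n·s·λ(x)` has expectation
equal to `f'(θ)` where `f(θ) = Σ_x λ(x) Q_θ(x)`. -/
theorem unbiased_gradient_estimator {D : ℕ} (σ : Matrix (Fin D) (Fin D) ℂ)
    (hherm : σᴴ = σ) (hinv : σ * σ = 1) (n : ℕ) (hn : 0 < n)
    (W : Fin (n + 1) → Matrix (Fin D) (Fin D) ℂ →ₗ[ℂ] Matrix (Fin D) (Fin D) ℂ)
    (ρ : Matrix (Fin D) (Fin D) ℂ)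
    {X : Type*} [Fintype X] (Pi_x : X → Matrix (Fin D) (Fin D) ℂ) (lam : X → ℝ)
    (θ : ℝ) :
    HasDerivAt
      (fun t : ℝ => ∑ x : X, (lam x : ℂ) * (Pi_x x * rotChain σ n W (fun _ => t) ρ).trace)
      (∑ i : Fin n, ∑ s ∈ ({-1, 1} : Finset ℝ), ∑ x : X,
        ((1 / (n : ℂ)) * (1 / 2) *
          (Pi_x x * rotChain σ n W (Function.update (fun _ => θ) i (θ + s * (π / 2))) ρ).trace *
          ((n : ℂ) * (s : ℂ) * (lam x : ℂ))))
      θ := by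
  classical
  obtain ⟨C, hC⟩ := chain_repr σ hherm n W ρ
  set c : (Fin n → Fin 3) → ℂ := fun v => ∑ x : X, (lam x : ℂ) * (Pi_x x * C v).trace with hc
  have hF : ∀ θs : Fin n → ℝ,
      (∑ x : X, (lam x : ℂ) * (Pi_x x * rotChain σ n W θs ρ).trace)
        = ∑ v : Fin n → Fin 3, (∏ i, phi (v i) (θs i)) * c v := by
    intro θs
    rw [hC]
    simp only [Finset.mul_sum, Matrix.mul_smul, Matrix.trace_sum, Matrix.trace_smul,
      smul_eq_mul, hc]
    rw [Finset.sum_comm]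
    refine Finset.sum_congr rfl fun v _ => ?_
    exact Finset.sum_congr rfl fun x _ => by ring
  have hD : HasDerivAt (fun t : ℝ => ∑ v : Fin n → Fin 3, (∏ i, phi (v i) t) * c v)
      (∑ v : Fin n → Fin 3,
        (∑ i, (∏ j ∈ Finset.univ.erase i, phi (v j) θ) • phid (v i) θ) * c v) θ :=
    HasDerivAt.fun_sum fun v _ =>
      (HasDerivAt.fun_finsetProd fun i _ => phi_hasDerivAt (v i) θ).mul_const _
  have hfun : (fun t : ℝ => ∑ x : X, (lam x : ℂ) * (Pi_x x * rotChain σ n W (fun _ => t) ρ).trace)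
      = fun t : ℝ => ∑ v : Fin n → Fin 3, (∏ i, phi (v i) t) * c v :=
    funext fun t => hF (fun _ => t)
  have hn' : (n:ℂ) ≠ 0 := Nat.cast_ne_zero.mpr hn.ne'
  have key : ∀ (i : Fin n) (u : ℝ),
      (∑ x : X, (lam x : ℂ) * (Pi_x x * rotChain σ n W (Function.update (fun _ => θ) i u) ρ).trace)
        = ∑ v : Fin n → Fin 3,
            (phi (v i) u * ∏ j ∈ Finset.univ.erase i, phi (v j) θ) * c v := by
    intro i u
    rw [hF]
    refine Finset.sum_congr rfl fun v _ => ?_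
    congr 1
    rw [← Finset.mul_prod_erase Finset.univ _ (Finset.mem_univ i)]
    congr 1
    · rw [Function.update_self]
    · exact Finset.prod_congr rfl fun j hj => by
        rw [Function.update_of_ne (Finset.ne_of_mem_erase hj)]
  have hRHS : (∑ i : Fin n, ∑ s ∈ ({-1, 1} : Finset ℝ), ∑ x : X,
        ((1 / (n : ℂ)) * (1 / 2) *
          (Pi_x x * rotChain σ n W (Function.update (fun _ => θ) i (θ + s * (π / 2))) ρ).trace *
          ((n : ℂ) * (s : ℂ) * (lam x : ℂ))))
      = ∑ v : Fin n → Fin 3,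
          (∑ i, (∏ j ∈ Finset.univ.erase i, phi (v j) θ) • phid (v i) θ) * c v := by
    have h1 : ∀ (i : Fin n) (s : ℝ),
        (∑ x : X, ((1 / (n : ℂ)) * (1 / 2) *
          (Pi_x x * rotChain σ n W (Function.update (fun _ => θ) i (θ + s * (π / 2))) ρ).trace *
          ((n : ℂ) * (s : ℂ) * (lam x : ℂ))))
        = ∑ v : Fin n → Fin 3,
            (((s:ℂ)/2) * phi (v i) (θ + s*(π/2))) *
              ((∏ j ∈ Finset.univ.erase i, phi (v j) θ) * c v) := by
      intro i s
      have h2 : (∑ x : X, ((s:ℂ)/2) * ((lam x : ℂ) *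
          (Pi_x x * rotChain σ n W (Function.update (fun _ => θ) i (θ + s * (π / 2))) ρ).trace))
          = ∑ v : Fin n → Fin 3, (((s:ℂ)/2) * phi (v i) (θ + s*(π/2))) *
              ((∏ j ∈ Finset.univ.erase i, phi (v j) θ) * c v) := by
        rw [← Finset.mul_sum, key i (θ + s*(π/2)), Finset.mul_sum]
        exact Finset.sum_congr rfl fun v _ => by ring
      rw [← h2]
      refine Finset.sum_congr rfl fun x _ => ?_
      field_simp
    calc (∑ i : Fin n, ∑ s ∈ ({-1, 1} : Finset ℝ), ∑ x : X,
        ((1 / (n : ℂ)) * (1 / 2) *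
          (Pi_x x * rotChain σ n W (Function.update (fun _ => θ) i (θ + s * (π / 2))) ρ).trace *
          ((n : ℂ) * (s : ℂ) * (lam x : ℂ))))
        = ∑ i : Fin n, ∑ v : Fin n → Fin 3,
            (∑ s ∈ ({-1, 1} : Finset ℝ), ((s:ℂ)/2) * phi (v i) (θ + s*(π/2))) *
              ((∏ j ∈ Finset.univ.erase i, phi (v j) θ) * c v) := by
          refine Finset.sum_congr rfl fun i _ => ?_
          rw [show (∑ s ∈ ({-1, 1} : Finset ℝ), ∑ x : X,
              ((1 / (n : ℂ)) * (1 / 2) *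
                (Pi_x x * rotChain σ n W
                  (Function.update (fun _ => θ) i (θ + s * (π / 2))) ρ).trace *
                ((n : ℂ) * (s : ℂ) * (lam x : ℂ))))
              = ∑ s ∈ ({-1, 1} : Finset ℝ), ∑ v : Fin n → Fin 3,
                  (((s:ℂ)/2) * phi (v i) (θ + s*(π/2))) *
                    ((∏ j ∈ Finset.univ.erase i, phi (v j) θ) * c v)
            from Finset.sum_congr rfl fun s _ => h1 i s]
          rw [Finset.sum_comm]
          exact Finset.sum_congr rfl fun v _ => (Finset.sum_mul _ _ _).symm
      _ = ∑ v : Fin n → Fin 3,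
          (∑ i, (∏ j ∈ Finset.univ.erase i, phi (v j) θ) • phid (v i) θ) * c v := by
          rw [Finset.sum_comm]
          refine Finset.sum_congr rfl fun v _ => ?_
          rw [Finset.sum_mul]
          refine Finset.sum_congr rfl fun i _ => ?_
          rw [pair_shift (v i) θ, smul_eq_mul]
          ring
  rw [hfun, hRHS]
  exact hD
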